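/- An empirical model e over a measurement scenario admits a global section if and only if it can be realized by a factorizable hidden-variable model, i.e., there exist a finite set Λ, a probability distribution h on Λ, and for each λ ∈ Λ and each measurement x ∈ X a probability distribution p^λ_x on O, such that for every context C ∈ M and every s ∈ O^C one has e_C(s) = Σ_{λ ∈ Λ} h(λ) · Π_{x ∈ C} p^λ_x(s(x)). -/

import Mathlib

lemma aux_sum_prod {I O : Type} [Fintype I] [DecidableEq I] [Fintype O] (f : I → O → ℝ) :
    ∑ b : I → O, ∏ i, f i (b i) = ∏ i, ∑ o, f i o := by
  rw [Finset.prod_univ_sum]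
  rw [Fintype.piFinset_univ]

lemma aux_key {X O : Type} [Fintype X] [DecidableEq X] [Fintype O] [DecidableEq O]
    (C : Finset X) (s : {x // x ∈ C} → O) (g : X → O → ℝ)
    (hg : ∀ x, ∑ o, g x o = 1) :
    ∑ t ∈ Finset.univ.filter (fun t : X → O => (fun x : {x // x ∈ C} => t x.1) = s),
        ∏ x, g x (t x) = ∏ x : {x // x ∈ C}, g x.1 (s x) := by
  classical
  rw [Finset.sum_filter]
  set E := Equiv.piEquivPiSubtypeProd (fun x => x ∈ C) (fun _ => O) with hE
  rw [← E.symm.sum_comp]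
  rw [Fintype.sum_prod_type]
  have hcond : ∀ (a : {x // x ∈ C} → O) (b : {x // ¬ x ∈ C} → O),
      (fun x : {x // x ∈ C} => (E.symm (a, b)) x.1) = a := by
    intro a b
    funext x
    simp [hE, Equiv.piEquivPiSubtypeProd_symm_apply, x.2]
  have step : ∀ (a : {x // x ∈ C} → O),
      (∑ b : {x // ¬ x ∈ C} → O,
        if (fun x : {x // x ∈ C} => (E.symm (a, b)) x.1) = s then
          ∏ x, g x (E.symm (a, b) x) else 0)
      = if a = s then (∏ x : {x // x ∈ C}, g x.1 (a x)) else 0 := by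
    intro a
    simp only [hcond]
    by_cases h : a = s
    · simp only [if_pos h]
      have hsplit : ∀ b : {x // ¬ x ∈ C} → O,
          ∏ x, g x (E.symm (a, b) x)
          = (∏ x : {x // x ∈ C}, g x.1 (a x)) * (∏ x : {x // ¬ x ∈ C}, g x.1 (b x)) := by
        intro b
        rw [← Fintype.prod_subtype_mul_prod_subtype (fun x => x ∈ C)
          (fun x => g x (E.symm (a, b) x))]
        congr 1
        · refine Finset.prod_congr (by congr 1 <;> exact Subsingleton.elim _ _) fun x _ => ?_
          simp [hE, Equiv.piEquivPiSubtypeProd_symm_apply, x.2]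
        · refine Finset.prod_congr (by congr 1 <;> exact Subsingleton.elim _ _) fun x _ => ?_
          simp [hE, Equiv.piEquivPiSubtypeProd_symm_apply, x.2]
      simp only [hsplit]
      rw [← Finset.mul_sum, aux_sum_prod]
      simp [hg]
    · simp [h]
  rw [Finset.sum_congr rfl (fun a _ => step a)]
  simp

/-- An empirical model over a measurement scenario admits a global section if and only if
it can be realized by a factorizable hidden-variable model. -/
theorem global_section_iff_factorizable_hidden_variable_model
    {X O : Type} [Fintype X] [DecidableEq X] [Fintype O] [DecidableEq O]
    (M : Finset (Finset X)) (hcover : ∀ x : X, ∃ C ∈ M, x ∈ C)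
    (e : (C : Finset X) → ({x // x ∈ C} → O) → ℝ)
    (he0 : ∀ C ∈ M, ∀ s : {x // x ∈ C} → O, 0 ≤ e C s)
    (he1 : ∀ C ∈ M, ∑ s : {x // x ∈ C} → O, e C s = 1) :
    (∃ d : (X → O) → ℝ,
        (∀ t, 0 ≤ d t) ∧ (∑ t : X → O, d t = 1) ∧
        ∀ C ∈ M, ∀ s : {x // x ∈ C} → O,
          e C s = ∑ t ∈ Finset.univ.filter
              (fun t : X → O => (fun x : {x // x ∈ C} => t x.1) = s), d t) ↔
    (∃ (n : ℕ) (h : Fin n → ℝ) (p : Fin n → X → O → ℝ),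
        (∀ l, 0 ≤ h l) ∧ (∑ l, h l = 1) ∧
        (∀ l x o, 0 ≤ p l x o) ∧ (∀ l x, ∑ o, p l x o = 1) ∧
        ∀ C ∈ M, ∀ s : {x // x ∈ C} → O,
          e C s = ∑ l, h l * ∏ x : {x // x ∈ C}, p l x.1 (s x)) := by
  classical
  constructor
  · rintro ⟨d, hd0, hd1, hdm⟩
    refine ⟨Fintype.card (X → O), fun l => d ((Fintype.equivFin (X → O)).symm l),
      fun l x o => if (Fintype.equivFin (X → O)).symm l x = o then 1 else 0,
      fun l => hd0 _, ?_, fun l x o => by positivity, fun l x => by simp, ?_⟩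
    · rw [(Fintype.equivFin (X → O)).symm.sum_comp]
      exact hd1
    · intro C hC s
      rw [hdm C hC s, Finset.sum_filter, ← (Fintype.equivFin (X → O)).symm.sum_comp
        (fun t => if (fun x : {x // x ∈ C} => t x.1) = s then d t else 0)]
      refine Finset.sum_congr rfl fun l _ => ?_
      set t := (Fintype.equivFin (X → O)).symm l
      have : (∏ x : {x // x ∈ C}, if t x.1 = s x then (1:ℝ) else 0)
          = if (fun x : {x // x ∈ C} => t x.1) = s then 1 else 0 := by
        rw [Finset.prod_boole]
        congr 1
        simp [funext_iff]
      rw [this]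
      by_cases h : (fun x : {x // x ∈ C} => t x.1) = s <;> simp [h] <;> rfl
  · rintro ⟨n, h, p, hh0, hh1, hp0, hp1, hpm⟩
    refine ⟨fun t => ∑ l, h l * ∏ x, p l x (t x), fun t => ?_, ?_, ?_⟩
    · exact Finset.sum_nonneg fun l _ => mul_nonneg (hh0 l)
        (Finset.prod_nonneg fun x _ => hp0 l x _)
    · rw [Finset.sum_comm]
      calc ∑ l, ∑ t : X → O, h l * ∏ x, p l x (t x)
          = ∑ l, h l * ∑ t : X → O, ∏ x, p l x (t x) := by
            simp [Finset.mul_sum]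
        _ = 1 := by
            simp only [aux_sum_prod]
            simp [hp1, hh1]
    · intro C hC s
      rw [hpm C hC s]
      rw [Finset.sum_comm]
      refine Finset.sum_congr rfl fun l _ => ?_
      rw [← Finset.mul_sum, aux_key C s (p l) (hp1 l)]
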